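/- Let F and G be CDFs of real-valued probability measures with generalized quantile functions Q_F and Q_G, and let U be uniformly distributed on (0,1). Then the pair (X,Y) = (Q_F(U), Q_G(1−U)) satisfies P(X ≤ x, Y ≤ y) = max{F(x) + G(y) − 1, 0} for all (x,y), and X has CDF F, Y has CDF G. -/

import Mathlib

open MeasureTheory Set

/-- Generalized quantile (inverse CDF): `Q_F(u) = inf {x | F x ≥ u}`. -/
noncomputable def quantile (F : ℝ → ℝ) (u : ℝ) : ℝ := sInf {x | u ≤ F x}

/-- CDF of a real random variable `X` under `P`. -/
noncomputable def cdfRV {Ω : Type*} [MeasurableSpace Ω] (P : Measure Ω) (X : Ω → ℝ) (x : ℝ) : ℝ :=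
  (P {ω | X ω ≤ x}).toReal

/-- CDF of a measure on ℝ. -/
noncomputable def cdfOf (μ : Measure ℝ) (x : ℝ) : ℝ := (μ (Iic x)).toReal

/-- Uniform distribution on (0,1). -/
noncomputable def unif : Measure ℝ := volume.restrict (Ioo 0 1)

/-- 1-Wasserstein distance on ℝ: infimum over couplings of the expected distance. -/
noncomputable def W1 (μ ν : Measure ℝ) : ENNReal :=
  ⨅ π ∈ {π : Measure (ℝ × ℝ) | π.map Prod.fst = μ ∧ π.map Prod.snd = ν},
    ∫⁻ p, ENNReal.ofReal |p.1 - p.2| ∂π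

open Filter ProbabilityTheory Topology

lemma cdfOf_eq (μ : Measure ℝ) [IsProbabilityMeasure μ] : cdfOf μ = ⇑(cdf μ) :=
  funext fun x => (cdf_eq_real μ x).symm

lemma quantile_cdf_le_iff (μ : Measure ℝ) [IsProbabilityMeasure μ] {u x : ℝ}
    (h0 : 0 < u) (h1 : u < 1) : quantile (cdfOf μ) u ≤ x ↔ u ≤ cdfOf μ x := by
  rw [cdfOf_eq]
  set F := ⇑(cdf μ) with hF
  set S : Set ℝ := {x | u ≤ F x} with hS
  have hbdd : BddBelow S := by
    obtain ⟨z, hz⟩ := eventually_atBot.1 ((tendsto_cdf_atBot μ).eventually (eventually_lt_nhds h0))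
    refine ⟨z, fun s hs => ?_⟩
    by_contra hzs
    exact absurd hs (not_le.2 (hz s (le_of_not_ge hzs)))
  have hne : S.Nonempty := ((tendsto_cdf_atTop μ).eventually (eventually_ge_nhds h1)).exists
  constructor
  · intro h
    have ha : u ≤ F (sInf S) := by
      by_contra hlt
      push_neg at hlt
      have hev : ∀ᶠ t in 𝓝[≥] (sInf S), F t < u :=
        ((cdf μ).right_continuous (sInf S)).eventually (eventually_lt_nhds hlt)
      obtain ⟨b, hb, hsub⟩ := mem_nhdsGE_iff_exists_Ico_subset.1 hev
      obtain ⟨s, hsS, hsb⟩ := (csInf_lt_iff hbdd hne).1 hb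
      have : u ≤ F s := hsS
      exact absurd this (not_le.2 (hsub ⟨csInf_le hbdd hsS, hsb⟩))
    exact ha.trans ((monotone_cdf μ) h)
  · intro h
    exact csInf_le hbdd h

theorem antimonotone_coupling_cdf {Ω : Type*} [MeasurableSpace Ω] (P : Measure Ω)
    [IsProbabilityMeasure P] (μ ν : Measure ℝ) [IsProbabilityMeasure μ] [IsProbabilityMeasure ν]
    (U : Ω → ℝ) (hU : Measurable U) (hUnif : P.map U = unif) :
    (∀ x y : ℝ,
      (P {ω | quantile (cdfOf μ) (U ω) ≤ x ∧ quantile (cdfOf ν) (1 - U ω) ≤ y}).toReal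
        = max (cdfOf μ x + cdfOf ν y - 1) 0) ∧
    (∀ x : ℝ, cdfRV P (fun ω => quantile (cdfOf μ) (U ω)) x = cdfOf μ x) ∧
    (∀ y : ℝ, cdfRV P (fun ω => quantile (cdfOf ν) (1 - U ω)) y = cdfOf ν y) := by
  -- a.e. ω, U ω ∈ (0,1)
  have hae01 : ∀ᵐ ω ∂P, U ω ∈ Ioo (0:ℝ) 1 := by
    rw [ae_iff]
    have : {ω | ¬ U ω ∈ Ioo (0:ℝ) 1} = U ⁻¹' (Ioo 0 1)ᶜ := rfl
    rw [this, ← Measure.map_apply hU measurableSet_Ioo.compl, hUnif, unif,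
      Measure.restrict_apply measurableSet_Ioo.compl]
    simp
  have key : ∀ (p : ℝ → Prop) (D : Set ℝ), MeasurableSet D →
      (∀ u ∈ Ioo (0:ℝ) 1, (p u ↔ u ∈ D)) →
      P {ω | p (U ω)} = volume (D ∩ Ioo 0 1) := by
    intro p D hD hiff
    have hae : {ω | p (U ω)} =ᵐ[P] U ⁻¹' (D ∩ Ioo 0 1) := by
      rw [eventuallyEq_set]
      filter_upwards [hae01] with ω hω
      simp only [mem_preimage, mem_inter_iff, mem_setOf_eq]
      exact ⟨fun h => ⟨(hiff _ hω).1 h, hω⟩, fun h => (hiff _ hω).2 h.1⟩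
    rw [measure_congr hae, ← Measure.map_apply hU (hD.inter measurableSet_Ioo), hUnif, unif,
      Measure.restrict_apply (hD.inter measurableSet_Ioo), inter_assoc, inter_self]
  -- bounds on cdfs
  have h0F : ∀ (κ : Measure ℝ) [IsProbabilityMeasure κ] (x : ℝ), 0 ≤ cdfOf κ x := by
    intro κ _ x; rw [cdfOf_eq]; exact cdf_nonneg κ x
  have h1F : ∀ (κ : Measure ℝ) [IsProbabilityMeasure κ] (x : ℝ), cdfOf κ x ≤ 1 := by
    intro κ _ x; rw [cdfOf_eq]; exact cdf_le_one κ x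
  -- volume squeeze lemma
  have vol : ∀ (D : Set ℝ) (a b : ℝ), 0 ≤ a → b ≤ 1 → Ioo a b ⊆ D → D ⊆ Icc a b →
      volume (D ∩ Ioo 0 1) = ENNReal.ofReal (b - a) := by
    intro D a b ha hb hsub1 hsub2
    apply le_antisymm
    · calc volume (D ∩ Ioo 0 1) ≤ volume (Icc a b) :=
            measure_mono (fun t ht => hsub2 ht.1)
        _ = ENNReal.ofReal (b - a) := Real.volume_Icc
    · calc ENNReal.ofReal (b - a) = volume (Ioo a b) := Real.volume_Ioo.symm
        _ ≤ volume (D ∩ Ioo 0 1) := measure_mono (fun t ht =>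
            ⟨hsub1 ht, ha.trans_lt ht.1, ht.2.trans_le hb⟩)
  refine ⟨?_, ?_, ?_⟩
  · intro x y
    have hiff : ∀ u ∈ Ioo (0:ℝ) 1,
        ((quantile (cdfOf μ) u ≤ x ∧ quantile (cdfOf ν) (1 - u) ≤ y)
          ↔ u ∈ Icc (1 - cdfOf ν y) (cdfOf μ x)) := by
      intro u hu
      rw [mem_Icc, quantile_cdf_le_iff μ hu.1 hu.2,
        quantile_cdf_le_iff ν (by linarith [hu.1, hu.2]) (by linarith [hu.1, hu.2])]
      constructor
      · rintro ⟨h1, h2⟩; exact ⟨by linarith, h1⟩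
      · rintro ⟨h1, h2⟩; exact ⟨h2, by linarith⟩
    rw [key _ _ measurableSet_Icc hiff,
      vol (Icc (1 - cdfOf ν y) (cdfOf μ x)) (1 - cdfOf ν y) (cdfOf μ x)
        (by linarith [h1F ν y]) (h1F μ x) (fun t ht => ⟨ht.1.le, ht.2.le⟩) subset_rfl,
      ENNReal.toReal_ofReal']
    congr 1; ring
  · intro x
    have hiff : ∀ u ∈ Ioo (0:ℝ) 1,
        (quantile (cdfOf μ) u ≤ x ↔ u ∈ Icc 0 (cdfOf μ x)) := by
      intro u hu
      rw [mem_Icc, quantile_cdf_le_iff μ hu.1 hu.2]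
      exact ⟨fun h => ⟨hu.1.le, h⟩, fun h => h.2⟩
    rw [cdfRV, key _ _ measurableSet_Icc hiff,
      vol (Icc 0 (cdfOf μ x)) 0 (cdfOf μ x) le_rfl (h1F μ x)
        (fun t ht => ⟨ht.1.le, ht.2.le⟩) subset_rfl,
      sub_zero, ENNReal.toReal_ofReal (h0F μ x)]
  · intro y
    have hiff : ∀ u ∈ Ioo (0:ℝ) 1,
        (quantile (cdfOf ν) (1 - u) ≤ y ↔ u ∈ Icc (1 - cdfOf ν y) 1) := by
      intro u hu
      rw [mem_Icc, quantile_cdf_le_iff ν (by linarith [hu.1, hu.2]) (by linarith [hu.1, hu.2])]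
      constructor
      · intro h; exact ⟨by linarith, hu.2.le⟩
      · intro h; linarith [h.1]
    rw [cdfRV, key _ _ measurableSet_Icc hiff,
      vol (Icc (1 - cdfOf ν y) 1) (1 - cdfOf ν y) 1 (by linarith [h1F ν y]) le_rfl
        (fun t ht => ⟨ht.1.le, ht.2.le⟩) subset_rfl,
      show (1 : ℝ) - (1 - cdfOf ν y) = cdfOf ν y by ring, ENNReal.toReal_ofReal (h0F ν y)]
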